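/- Let S be a closed subset of a Hilbert space, x ∈ H, ε > 0, and z ∈ proj_S^ε(x). Then there exists v ∈ S with ‖z - v‖ < 2√ε such that x - z ∈ N^P(S; v) + 3√ε B, where N^P denotes the proximal normal cone. -/
import Mathlib


open Metric
open scoped InnerProductSpace

/-- The proximal normal cone to `S` at `x`. -/
def proxNormalCone {H : Type*} [NormedAddCommGroup H] [InnerProductSpace ℝ H]
    (S : Set H) (x : H) : Set H :=
  {ζ | ∃ σ ≥ (0:ℝ), ∃ η > (0:ℝ), ∀ y ∈ S, ‖y - x‖ < η →
    ⟪ζ, y - x⟫_ℝ ≤ σ * ‖y - x‖ ^ 2}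

open Filter Finset
open scoped Topology

section Aux

variable {H : Type*} [NormedAddCommGroup H] [InnerProductSpace ℝ H]

/-- A nonnegative function on a nonempty set has approximate minimizers. -/
lemma exists_approx_min (S : Set H) (hS : S.Nonempty) (Q : H → ℝ)
    (hQ : ∀ y ∈ S, 0 ≤ Q y) {c : ℝ} (hc : 0 < c) :
    ∃ v ∈ S, ∀ y ∈ S, Q v < Q y + c := by
  have hne : (Q '' S).Nonempty := hS.image Q
  have hbdd : BddBelow (Q '' S) := ⟨0, by rintro _ ⟨y, hy, rfl⟩; exact hQ y hy⟩
  obtain ⟨a, ⟨v, hv, rfl⟩, hlt⟩ := Real.lt_sInf_add_pos hne hc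
  refine ⟨v, hv, fun y hy => lt_of_lt_of_le hlt ?_⟩
  have : sInf (Q '' S) ≤ Q y := csInf_le hbdd ⟨y, hy, rfl⟩
  linarith

open Classical in
/-- Choice of an approximate minimizer. -/
noncomputable def pickAux (S : Set H) (hS : S.Nonempty) (Q : H → ℝ) (c : ℝ) : H :=
  if h : ∃ v ∈ S, ∀ y ∈ S, Q v < Q y + c then h.choose else hS.choose

lemma pickAux_spec {S : Set H} (hS : S.Nonempty) {Q : H → ℝ} {c : ℝ}
    (h : ∃ v ∈ S, ∀ y ∈ S, Q v < Q y + c) :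
    pickAux S hS Q c ∈ S ∧ ∀ y ∈ S, Q (pickAux S hS Q c) < Q y + c := by
  classical
  rw [pickAux, dif_pos h]
  exact ⟨h.choose_spec.1, h.choose_spec.2⟩

/-- The Borwein–Preiss style iteration state: current approximate minimizer and
current penalized functional. -/
noncomputable def bpState (S : Set H) (hS : S.Nonempty) (x z : H) (μ e : ℕ → ℝ) :
    ℕ → H × (H → ℝ)
  | 0 => (z, fun y => ‖x - y‖ ^ 2)
  | (n + 1) =>
      let s := bpState S hS x z μ e n
      let Q : H → ℝ := fun y => s.2 y + μ n * ‖y - s.1‖ ^ 2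
      (pickAux S hS Q (e (n + 1)), Q)

end Aux

set_option maxHeartbeats 1600000 in
theorem stmt2 {H : Type*} [NormedAddCommGroup H] [InnerProductSpace ℝ H] [CompleteSpace H]
    (S : Set H) (hS : S.Nonempty) (hSc : IsClosed S) (x : H) (ε : ℝ) (hε : 0 < ε)
    (z : H) (hz : z ∈ S ∧ ‖x - z‖ ^ 2 < (infDist x S) ^ 2 + ε) :
    ∃ v ∈ S, ‖z - v‖ < 2 * Real.sqrt ε ∧
      ∃ w ∈ proxNormalCone S v, ∃ b : H, ‖b‖ ≤ 1 ∧
        x - z = w + (3 * Real.sqrt ε) • b := by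
  set δ := Real.sqrt ε with hδdef
  have hδ : 0 < δ := Real.sqrt_pos.mpr hε
  have hδsq : δ ^ 2 = ε := Real.sq_sqrt hε.le
  -- parameters
  set μ : ℕ → ℝ := fun n => (1/2 : ℝ) ^ (n + 1) with hμdef
  set e : ℕ → ℝ := fun n => ε * (1/128 : ℝ) ^ n with hedef
  have hμpos : ∀ n, 0 < μ n := fun n => by positivity
  have hepos : ∀ n, 0 < e n := fun n => by positivity
  -- the iteration
  set st := bpState S hS x z μ e with hstdef
  set vv : ℕ → H := fun n => (st n).1 with hvvdef
  set QQ : ℕ → H → ℝ := fun n => (st n).2 with hQQdef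
  have hv0 : vv 0 = z := rfl
  have hQ0 : ∀ y, QQ 0 y = ‖x - y‖ ^ 2 := fun y => rfl
  have hQs : ∀ n y, QQ (n+1) y = QQ n y + μ n * ‖y - vv n‖ ^ 2 := fun n y => rfl
  have hvs : ∀ n, vv (n+1) = pickAux S hS (QQ (n+1)) (e (n+1)) := fun n => rfl
  -- formula for QQ
  have hQform : ∀ n y, QQ n y = ‖x - y‖ ^ 2 + ∑ i ∈ range n, μ i * ‖y - vv i‖ ^ 2 := by
    intro n
    induction n with
    | zero => intro y; simp [hQ0]
    | succ n ih =>
        intro y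
        rw [hQs n y, ih y, Finset.sum_range_succ]
        ring
  have hQnonneg : ∀ n, ∀ y ∈ S, 0 ≤ QQ n y := by
    intro n y _
    rw [hQform]
    have h1 : 0 ≤ ‖x - y‖ ^ 2 := by positivity
    have h2 : 0 ≤ ∑ i ∈ range n, μ i * ‖y - vv i‖ ^ 2 :=
      Finset.sum_nonneg fun i _ => by positivity
    linarith
  -- the invariant
  have inv : ∀ n, vv n ∈ S ∧ ∀ y ∈ S, QQ n (vv n) < QQ n y + e n := by
    intro n
    induction n with
    | zero =>
        refine ⟨hz.1, fun y hy => ?_⟩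
        have h1 : infDist x S ≤ ‖x - y‖ := by
          rw [← dist_eq_norm]; exact infDist_le_dist_of_mem hy
        have h2 : (infDist x S) ^ 2 ≤ ‖x - y‖ ^ 2 :=
          pow_le_pow_left₀ infDist_nonneg h1 2
        have h3 : e 0 = ε := by simp [hedef]
        rw [hQ0, hQ0, hv0, h3]
        have := hz.2
        linarith
    | succ n _ =>
        have hex : ∃ v ∈ S, ∀ y ∈ S, QQ (n+1) v < QQ (n+1) y + e (n+1) :=
          exists_approx_min S hS (QQ (n+1)) (hQnonneg (n+1)) (hepos (n+1))
        have := pickAux_spec hS hex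
        rw [← hvs n] at this
        exact this
  clear_value vv QQ st
  -- step estimate
  have hstep : ∀ n, μ n * ‖vv (n+1) - vv n‖ ^ 2 < e n + e (n+1) := by
    intro n
    have h1 : QQ (n+1) (vv (n+1)) < QQ (n+1) (vv n) + e (n+1) :=
      (inv (n+1)).2 (vv n) (inv n).1
    have h2 : QQ (n+1) (vv n) = QQ n (vv n) := by
      rw [hQs]; simp
    have h3 : QQ n (vv n) < QQ n (vv (n+1)) + e n :=
      (inv n).2 (vv (n+1)) (inv (n+1)).1
    have h4 : QQ (n+1) (vv (n+1)) = QQ n (vv (n+1)) + μ n * ‖vv (n+1) - vv n‖ ^ 2 :=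
      hQs n (vv (n+1))
    linarith
  -- geometric bound on the steps
  have hgeom : ∀ n, ‖vv (n+1) - vv n‖ ≤ (3/2) * δ * (1/8 : ℝ) ^ n := by
    intro n
    have h1 : ‖vv (n+1) - vv n‖ ^ 2 < (e n + e (n+1)) / μ n := by
      rw [lt_div_iff₀ (hμpos n), mul_comm]
      exact hstep n
    have h2 : (e n + e (n+1)) / μ n ≤ ((3/2) * δ * (1/8 : ℝ) ^ n) ^ 2 := by
      have hμn : μ n = (1/2 : ℝ) ^ (n+1) := rfl
      have hen : e n = ε * (1/128 : ℝ) ^ n := rfl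
      have hen1 : e (n+1) = ε * (1/128 : ℝ) ^ (n+1) := rfl
      rw [hμn, hen, hen1, div_le_iff₀ (by positivity)]
      have e1 : ((1/8:ℝ)^n)^2 * (1/2:ℝ)^n = (1/128:ℝ)^n := by
        rw [sq, ← mul_pow, ← mul_pow]; norm_num
      have key : ((3/2) * δ * (1/8 : ℝ) ^ n) ^ 2 * (1/2 : ℝ) ^ (n+1)
          = (9/8) * ε * ((1/128 : ℝ) ^ n) := by
        have : ((3/2) * δ * (1/8 : ℝ) ^ n) ^ 2 * (1/2 : ℝ) ^ (n+1)
            = (9/4) * δ^2 * (((1/8:ℝ)^n)^2 * (1/2:ℝ)^n) * (1/2) := by ring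
        rw [this, e1, hδsq]; ring
      rw [key, pow_succ]
      have hp : (0:ℝ) < (1/128 : ℝ) ^ n := by positivity
      nlinarith [mul_pos hε hp]
    have h3 : ‖vv (n+1) - vv n‖ ^ 2 ≤ ((3/2) * δ * (1/8 : ℝ) ^ n) ^ 2 :=
      le_of_lt (lt_of_lt_of_le h1 h2)
    have h4 : (0:ℝ) ≤ (3/2) * δ * (1/8 : ℝ) ^ n := by positivity
    calc ‖vv (n+1) - vv n‖ = Real.sqrt (‖vv (n+1) - vv n‖ ^ 2) :=
          (Real.sqrt_sq (norm_nonneg _)).symm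
      _ ≤ Real.sqrt (((3/2) * δ * (1/8 : ℝ) ^ n) ^ 2) := Real.sqrt_le_sqrt h3
      _ = (3/2) * δ * (1/8 : ℝ) ^ n := Real.sqrt_sq h4
  -- Cauchy sequence and limit
  have hdist : ∀ n, dist (vv n) (vv (n+1)) ≤ (3/2) * δ * (1/8 : ℝ) ^ n := by
    intro n
    rw [dist_eq_norm, norm_sub_rev]
    exact hgeom n
  have hcauchy : CauchySeq vv :=
    cauchySeq_of_le_geometric (1/8 : ℝ) ((3/2) * δ) (by norm_num) hdist
  obtain ⟨v, hvlim⟩ := cauchySeq_tendsto_of_complete hcauchy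
  have hvS : v ∈ S := hSc.mem_of_tendsto hvlim (Filter.Eventually.of_forall fun n => (inv n).1)
  have hvd : ∀ n, ‖vv n - v‖ ≤ (12/7) * δ * (1/8 : ℝ) ^ n := by
    intro n
    have h := dist_le_of_le_geometric_of_tendsto (1/8 : ℝ) ((3/2) * δ) (by norm_num)
      hdist hvlim n
    rw [dist_eq_norm] at h
    calc ‖vv n - v‖ ≤ (3/2) * δ * (1/8 : ℝ) ^ n / (1 - 1/8) := h
      _ = (12/7) * δ * (1/8 : ℝ) ^ n := by ring
  have hvz0 : ‖v - z‖ ≤ (12/7) * δ := by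
    have h := hvd 0
    rw [norm_sub_rev]
    simpa [hv0] using h
  have hvz : ‖z - v‖ < 2 * δ := by
    rw [norm_sub_rev]
    have : (12/7) * δ < 2 * δ := by nlinarith [hδ]
    linarith [hvz0]
  -- summation facts
  have hμsum : HasSum μ 1 := by
    have h := (hasSum_geometric_of_lt_one (by norm_num : (0:ℝ) ≤ 1/2)
      (by norm_num : (1/2:ℝ) < 1)).mul_left (1/2 : ℝ)
    have heq : (fun n => (1/2:ℝ) * (1/2:ℝ)^n) = μ := by
      funext n
      show (1/2:ℝ) * (1/2:ℝ)^n = (1/2:ℝ)^(n+1)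
      rw [pow_succ]; ring
    rw [heq] at h
    norm_num at h
    exact h
  have hμle : ∀ i, μ i ≤ (1/2:ℝ)^i := by
    intro i
    have hi : μ i = (1/2:ℝ)^(i+1) := rfl
    rw [hi, pow_succ]
    have : (0:ℝ) < (1/2:ℝ)^i := by positivity
    nlinarith
  have hvvd : ∀ i, ‖v - vv i‖ ≤ (12/7) * δ * (1/8 : ℝ) ^ i := by
    intro i; rw [norm_sub_rev]; exact hvd i
  -- summability of the weighted centers
  have hsum1 : Summable (fun i => μ i • vv i) := by
    apply Summable.of_norm
    have hb : ∀ i, ‖μ i • vv i‖ ≤ (‖v‖ + 2 * δ) * (1/2:ℝ)^i := by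
      intro i
      rw [norm_smul, Real.norm_eq_abs, abs_of_pos (hμpos i)]
      have h8 : (1/8:ℝ)^i ≤ 1 := pow_le_one₀ (by norm_num) (by norm_num)
      have hvvi : ‖vv i‖ ≤ ‖v‖ + 2 * δ := by
        have h1 : ‖vv i‖ ≤ ‖v‖ + ‖vv i - v‖ := by
          have := norm_add_le v (vv i - v)
          simpa using this
        have h2 := hvd i
        nlinarith [hδ]
      have h0i : (0:ℝ) < (1/2:ℝ)^i := by positivity
      have := hμle i
      nlinarith [norm_nonneg (vv i), hμpos i, norm_nonneg v, hδ]
    exact Summable.of_nonneg_of_le (fun i => norm_nonneg _) hb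
      (((summable_geometric_of_lt_one (by norm_num) (by norm_num))).mul_left _)
  set t := ∑' i, μ i • vv i with htdef
  have ht : HasSum (fun i => μ i • vv i) t := hsum1.hasSum
  set w := (x - v) - (v - t) with hwdef
  -- convergence of the approximate normals
  set sn : ℕ → H := fun n => ∑ i ∈ range n, μ i • (vv n - vv i) with hsndef
  have hsn : ∀ n, sn n = (∑ i ∈ range n, μ i) • vv n - ∑ i ∈ range n, μ i • vv i := by
    intro n
    simp only [hsndef, smul_sub, Finset.sum_sub_distrib, Finset.sum_smul]
  have hwlim : Tendsto (fun n => (x - vv n) - sn n) atTop (𝓝 w) := by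
    have l1 : Tendsto (fun n => ∑ i ∈ range n, μ i) atTop (𝓝 (1:ℝ)) :=
      hμsum.tendsto_sum_nat
    have l2 : Tendsto (fun n => ∑ i ∈ range n, μ i • vv i) atTop (𝓝 t) :=
      ht.tendsto_sum_nat
    have l3 : Tendsto (fun n => (∑ i ∈ range n, μ i) • vv n) atTop (𝓝 ((1:ℝ) • v)) :=
      l1.smul hvlim
    rw [one_smul] at l3
    have heq : (fun n => (x - vv n) - sn n)
        = fun n => (x - vv n) - ((∑ i ∈ range n, μ i) • vv n - ∑ i ∈ range n, μ i • vv i) := by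
      funext n; rw [hsn n]
    rw [heq, hwdef]
    exact (tendsto_const_nhds.sub hvlim).sub (l3.sub l2)
  -- the approximate proximal inequality at stage n
  have key : ∀ y ∈ S, ∀ n,
      2 * ⟪(x - vv n) - sn n, y - vv n⟫_ℝ ≤ 2 * ‖y - vv n‖ ^ 2 + e n := by
    intro y hy n
    have hinv := (inv n).2 y hy
    rw [hQform n y, hQform n (vv n)] at hinv
    have eA : ‖x - y‖ ^ 2
        = ‖x - vv n‖ ^ 2 - 2 * ⟪x - vv n, y - vv n⟫_ℝ + ‖y - vv n‖ ^ 2 := by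
      have hxy : x - y = (x - vv n) - (y - vv n) := by abel
      rw [hxy, norm_sub_sq_real]
    have eB : ∀ i, ‖y - vv i‖ ^ 2
        = ‖y - vv n‖ ^ 2 + 2 * ⟪y - vv n, vv n - vv i⟫_ℝ + ‖vv n - vv i‖ ^ 2 := by
      intro i
      have hyi : y - vv i = (y - vv n) + (vv n - vv i) := by abel
      rw [hyi, norm_add_sq_real]
    have eInner : ∑ i ∈ range n, μ i * ⟪y - vv n, vv n - vv i⟫_ℝ
        = ⟪y - vv n, sn n⟫_ℝ := by
      rw [hsndef]
      rw [inner_sum]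
      simp_rw [real_inner_smul_right]
    have eSum : ∑ i ∈ range n, μ i * ‖y - vv i‖ ^ 2
        = (∑ i ∈ range n, μ i) * ‖y - vv n‖ ^ 2 + 2 * ⟪y - vv n, sn n⟫_ℝ
          + ∑ i ∈ range n, μ i * ‖vv n - vv i‖ ^ 2 := by
      calc ∑ i ∈ range n, μ i * ‖y - vv i‖ ^ 2
          = ∑ i ∈ range n, (μ i * ‖y - vv n‖ ^ 2
              + 2 * (μ i * ⟪y - vv n, vv n - vv i⟫_ℝ) + μ i * ‖vv n - vv i‖ ^ 2) := by
            refine Finset.sum_congr rfl fun i _ => ?_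
            rw [eB i]; ring
        _ = (∑ i ∈ range n, μ i) * ‖y - vv n‖ ^ 2
              + 2 * (∑ i ∈ range n, μ i * ⟪y - vv n, vv n - vv i⟫_ℝ)
              + ∑ i ∈ range n, μ i * ‖vv n - vv i‖ ^ 2 := by
            rw [Finset.sum_add_distrib, Finset.sum_add_distrib, ← Finset.sum_mul,
              ← Finset.mul_sum]
        _ = _ := by rw [eInner]
    have han : (∑ i ∈ range n, μ i) ≤ 1 :=
      sum_le_hasSum (range n) (fun i _ => (hμpos i).le) hμsum
    have hn2 : (0:ℝ) ≤ ‖y - vv n‖ ^ 2 := by positivity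
    have hmul : (∑ i ∈ range n, μ i) * ‖y - vv n‖ ^ 2 ≤ ‖y - vv n‖ ^ 2 :=
      mul_le_of_le_one_left hn2 han
    have hinner : ⟪(x - vv n) - sn n, y - vv n⟫_ℝ
        = ⟪x - vv n, y - vv n⟫_ℝ - ⟪y - vv n, sn n⟫_ℝ := by
      rw [inner_sub_left, real_inner_comm (sn n)]
    rw [hinner]
    rw [eA, eSum] at hinv
    linarith
  -- pass to the limit
  have hprox : ∀ y ∈ S, ⟪w, y - v⟫_ℝ ≤ 1 * ‖y - v‖ ^ 2 := by
    intro y hy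
    have h1 : Tendsto (fun n => y - vv n) atTop (𝓝 (y - v)) := tendsto_const_nhds.sub hvlim
    have lhs : Tendsto (fun n => 2 * ⟪(x - vv n) - sn n, y - vv n⟫_ℝ) atTop
        (𝓝 (2 * ⟪w, y - v⟫_ℝ)) := (hwlim.inner h1).const_mul 2
    have h3 : Tendsto e atTop (𝓝 (0:ℝ)) := by
      have := (tendsto_pow_atTop_nhds_zero_of_lt_one (by norm_num : (0:ℝ) ≤ 1/128)
        (by norm_num : (1/128:ℝ) < 1)).const_mul ε
      rw [mul_zero] at this
      exact this
    have rhs : Tendsto (fun n => 2 * ‖y - vv n‖ ^ 2 + e n) atTop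
        (𝓝 (2 * ‖y - v‖ ^ 2 + 0)) := ((h1.norm.pow 2).const_mul 2).add h3
    have := le_of_tendsto_of_tendsto' lhs rhs (key y hy)
    rw [add_zero] at this
    linarith
  have hwmem : w ∈ proxNormalCone S v :=
    ⟨1, zero_le_one, 1, one_pos, fun y hy _ => hprox y hy⟩
  -- bound on ‖v - t‖
  have hgsum : Summable (fun i => (6/7) * δ * (1/16:ℝ)^i) :=
    (summable_geometric_of_lt_one (by norm_num) (by norm_num)).mul_left _
  have hbnd : ∀ i, ‖μ i • (v - vv i)‖ ≤ (6/7) * δ * (1/16:ℝ)^i := by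
    intro i
    rw [norm_smul, Real.norm_eq_abs, abs_of_pos (hμpos i)]
    have h1 := hvvd i
    have h2 : μ i = (1/2:ℝ) * (1/2:ℝ)^i := by
      rw [show μ i = (1/2:ℝ)^(i+1) from rfl, pow_succ]; ring
    have h3 : (1/2:ℝ)^i * (1/8:ℝ)^i = (1/16:ℝ)^i := by rw [← mul_pow]; norm_num
    have h0 : (0:ℝ) < (1/2:ℝ)^i := by positivity
    calc μ i * ‖v - vv i‖ ≤ μ i * ((12/7) * δ * (1/8 : ℝ) ^ i) := by
          exact mul_le_mul_of_nonneg_left h1 (hμpos i).le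
      _ = (6/7) * δ * ((1/2:ℝ)^i * (1/8:ℝ)^i) := by rw [h2]; ring
      _ = (6/7) * δ * (1/16:ℝ)^i := by rw [h3]
  have hnormsum : Summable (fun i => ‖μ i • (v - vv i)‖) :=
    Summable.of_nonneg_of_le (fun i => norm_nonneg _) hbnd hgsum
  have hvt : ‖v - t‖ ≤ (32/35) * δ := by
    have hs1 : HasSum (fun i => μ i • v) ((1:ℝ) • v) := hμsum.smul_const v
    have hs2 : HasSum (fun i => μ i • v - μ i • vv i) ((1:ℝ) • v - t) := hs1.sub ht
    have heq : (fun i => μ i • v - μ i • vv i) = fun i => μ i • (v - vv i) := by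
      funext i; rw [smul_sub]
    rw [heq, one_smul] at hs2
    have htsum : v - t = ∑' i, μ i • (v - vv i) := hs2.tsum_eq.symm
    calc ‖v - t‖ = ‖∑' i, μ i • (v - vv i)‖ := by rw [htsum]
      _ ≤ ∑' i, ‖μ i • (v - vv i)‖ := norm_tsum_le_tsum_norm hnormsum
      _ ≤ ∑' i, (6/7) * δ * (1/16:ℝ)^i := Summable.tsum_le_tsum hbnd hnormsum hgsum
      _ = (6/7) * δ * (1 - 1/16:ℝ)⁻¹ := by
          rw [tsum_mul_left, tsum_geometric_of_lt_one (by norm_num) (by norm_num)]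
      _ ≤ (32/35) * δ := by
          have : ((1:ℝ) - 1/16)⁻¹ = 16/15 := by norm_num
          rw [this]
          nlinarith [hδ]
  -- final assembly
  have hxzw : x - z - w = (v - z) + (v - t) := by rw [hwdef]; abel
  have hbound : ‖x - z - w‖ ≤ (92/35) * δ := by
    rw [hxzw]
    have h1 : ‖v - z‖ + ‖v - t‖ ≤ (12/7) * δ + (32/35) * δ := add_le_add hvz0 hvt
    have h2 : (12/7) * δ + (32/35) * δ = (92/35) * δ := by ring
    calc ‖(v - z) + (v - t)‖ ≤ ‖v - z‖ + ‖v - t‖ := norm_add_le _ _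
      _ ≤ (92/35) * δ := by linarith
  have h3δ : (3 * δ) ≠ 0 := by positivity
  refine ⟨v, hvS, hvz, w, hwmem, (3 * δ)⁻¹ • (x - z - w), ?_, ?_⟩
  · rw [norm_smul, Real.norm_eq_abs, abs_of_pos (by positivity : (0:ℝ) < (3*δ)⁻¹)]
    have h1 : (3*δ)⁻¹ * ‖x - z - w‖ ≤ (3*δ)⁻¹ * ((92/35) * δ) :=
      mul_le_mul_of_nonneg_left hbound (by positivity)
    have h2 : (3*δ)⁻¹ * ((92/35) * δ) = 92/105 := by
      field_simp
      ring
    rw [h2] at h1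
    linarith
  · rw [smul_inv_smul₀ h3δ]
    abel
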